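/- For a partition λ of length at most n and variables u₁,…,uₙ, the branching rule S_λ(u₁,…,u_{n−1},uₙ) = Σ_{μ ≺ λ} S_μ(u₁,…,u_{n−1}) · uₙ^{|λ|−|μ|} holds, where the sum runs over partitions μ = (μ₁,…,μ_{n−1}) interlacing λ, i.e., λ₁ ≥ μ₁ ≥ λ₂ ≥ μ₂ ≥ ⋯ ≥ μ_{n−1} ≥ λₙ. -/

import Mathlib

/-- Complete homogeneous symmetric polynomial of degree `m` in `n` real variables. -/
noncomputable def hh (n m : ℕ) (u : Fin n → ℝ) : ℝ :=
  ∑ c ∈ Finset.Nat.antidiagonalTuple n m, ∏ i, u i ^ c i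

/-- `hh` extended by `0` to negative degrees. -/
noncomputable def hZ (n : ℕ) (m : ℤ) (u : Fin n → ℝ) : ℝ :=
  if 0 ≤ m then hh n m.toNat u else 0

/-- Schur polynomial of the partition `lam` (of length at most `l`), evaluated at `k`
real variables, defined via the Jacobi–Trudi determinant. -/
noncomputable def schur {l : ℕ} (lam : Fin l → ℕ) {k : ℕ} (u : Fin k → ℝ) : ℝ :=
  Matrix.det (Matrix.of fun i j : Fin l => hZ k ((lam i : ℤ) - (i : ℤ) + (j : ℤ)) u)

open Finset

lemma hZ_neg {n : ℕ} {m : ℤ} (h : m < 0) (u : Fin n → ℝ) : hZ n m u = 0 :=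
  if_neg (by omega)

lemma hh_zero (n : ℕ) (u : Fin n → ℝ) : hh n 0 u = 1 := by
  simp [hh, Finset.Nat.antidiagonalTuple_zero_right]

lemma hZ_zero (n : ℕ) (u : Fin n → ℝ) : hZ n 0 u = 1 := by
  simp [hZ, hh_zero]

lemma hZ_zero_vars {m : ℤ} (hm : 1 ≤ m) (u : Fin 0 → ℝ) : hZ 0 m u = 0 := by
  rw [hZ, if_pos (by omega)]
  obtain ⟨s, hs⟩ : ∃ s, m.toNat = s + 1 := ⟨m.toNat - 1, by omega⟩
  rw [hs]
  simp [hh, Finset.Nat.antidiagonalTuple_zero_succ]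

lemma hh_snoc (n m : ℕ) (u : Fin n → ℝ) (x : ℝ) :
    hh (n + 1) m (Fin.snoc u x) = ∑ k ∈ range (m + 1), x ^ k * hh n (m - k) u := by
  classical
  simp only [hh, Finset.mul_sum]
  rw [Finset.sum_sigma']
  refine Finset.sum_nbij' (fun c => ⟨c (Fin.last n), Fin.init c⟩)
    (fun p => Fin.snoc p.2 p.1) ?_ ?_ ?_ ?_ ?_
  · intro c hc
    rw [Finset.Nat.mem_antidiagonalTuple] at hc
    rw [Fin.sum_univ_castSucc] at hc
    simp only [Finset.mem_sigma, Finset.mem_range, Finset.Nat.mem_antidiagonalTuple]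
    constructor
    · omega
    · simp only [Fin.init]; omega
  · intro p hp
    rw [Finset.mem_sigma, Finset.mem_range, Finset.Nat.mem_antidiagonalTuple] at hp
    rw [Finset.Nat.mem_antidiagonalTuple, Fin.sum_univ_castSucc]
    simp only [Fin.snoc_castSucc, Fin.snoc_last]
    omega
  · intro c hc
    exact Fin.snoc_init_self c
  · intro p hp
    refine Sigma.ext ?_ ?_ <;> simp [Fin.init_snoc]
  · intro c hc
    rw [Finset.Nat.mem_antidiagonalTuple] at hc
    rw [Fin.prod_univ_castSucc]
    simp only [Fin.snoc_castSucc, Fin.snoc_last]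
    rw [mul_comm]
    simp [Fin.init]

lemma hZ_snoc (n : ℕ) (m : ℤ) (J : ℕ) (hm : m ≤ J) (u : Fin n → ℝ) (x : ℝ) :
    hZ (n + 1) m (Fin.snoc u x) = ∑ j ∈ range (J + 1), x ^ j * hZ n (m - j) u := by
  rcases lt_or_ge m 0 with h | h
  · rw [hZ_neg h]
    refine (Finset.sum_eq_zero fun j _ => ?_).symm
    rw [hZ_neg (by omega), mul_zero]
  · rw [hZ, if_pos h, hh_snoc]
    have hsub : range (m.toNat + 1) ⊆ range (J + 1) := by
      apply Finset.range_subset_range.2; omega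
    rw [← Finset.sum_subset hsub]
    · refine Finset.sum_congr rfl fun j hj => ?_
      rw [Finset.mem_range] at hj
      rw [hZ, if_pos (by omega)]
      congr 2
      omega
    · intro j _ hj
      rw [Finset.mem_range] at hj
      rw [hZ_neg (by omega), mul_zero]

/-- Elementary symmetric polynomials, defined by recursion. -/
noncomputable def ee : (n : ℕ) → ℕ → (Fin n → ℝ) → ℝ
  | _, 0, _ => 1
  | 0, _ + 1, _ => 0
  | n + 1, k + 1, u => ee n (k + 1) (Fin.init u) + u (Fin.last n) * ee n k (Fin.init u)

lemma ee_zero (n : ℕ) (u : Fin n → ℝ) : ee n 0 u = 1 := by cases n <;> rfl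

lemma ee_of_lt : ∀ {n k : ℕ}, n < k → ∀ (u : Fin n → ℝ), ee n k u = 0
  | 0, k + 1, _, u => rfl
  | n + 1, k + 1, h, u => by
    rw [ee, ee_of_lt (by omega), ee_of_lt (by omega), mul_zero, add_zero]

lemma ee_snoc (n k : ℕ) (u : Fin n → ℝ) (x : ℝ) :
    ee (n + 1) (k + 1) (Fin.snoc u x) = ee n (k + 1) u + x * ee n k u := by
  rw [ee, Fin.init_snoc, Fin.snoc_last]

/-- The alternating e-h relation. -/
lemma eh_rel : ∀ (n : ℕ) (u : Fin n → ℝ) (m : ℤ), 1 ≤ m →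
    ∑ k ∈ range (n + 1), (-1 : ℝ) ^ k * ee n k u * hZ n (m - k) u = 0 := by
  intro n
  induction n with
  | zero =>
    intro u m hm
    simp [ee_zero, hZ_zero_vars hm]
  | succ n ih =>
    intro u m hm
    set v := Fin.init u with hv
    set y := u (Fin.last n) with hy
    have hu : u = Fin.snoc v y := (Fin.snoc_init_self u).symm
    set G : ℤ → ℝ := fun r => ∑ k ∈ range (n + 1), (-1 : ℝ) ^ k * ee n k v * hZ n (r - k) v
      with hG
    have hG1 : ∀ r : ℤ, 1 ≤ r → G r = 0 := ih v
    have hGneg : ∀ r : ℤ, r < 0 → G r = 0 := by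
      intro r hr
      refine Finset.sum_eq_zero fun k _ => ?_
      rw [hZ_neg (by omega), mul_zero]
    set J : ℕ := m.toNat with hJ
    have hmJ : ∀ k : ℕ, m - k ≤ (J : ℤ) := fun k => by omega
    -- expand each hZ in n+1 variables
    have expand : ∀ k ∈ range (n + 2),
        (-1 : ℝ) ^ k * ee (n + 1) k u * hZ (n + 1) (m - k) u
          = ∑ j ∈ range (J + 1),
              (-1 : ℝ) ^ k * ee (n + 1) k u * (y ^ j * hZ n (m - k - j) v) := by
      intro k _
      rw [hu, hZ_snoc n (m - k) J (hmJ k) v y, Finset.mul_sum]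
    rw [Finset.sum_congr rfl expand]
    -- split e into two parts
    have esplit : ∀ k, ee (n + 1) k u
        = ee n k v + y * (if k = 0 then 0 else ee n (k - 1) v) := by
      intro k
      cases k with
      | zero => simp [ee_zero]
      | succ k => rw [hu, ee_snoc]; simp
    have split2 : ∀ k ∈ range (n + 2),
        ∑ j ∈ range (J + 1), (-1 : ℝ) ^ k * ee (n + 1) k u * (y ^ j * hZ n (m - k - j) v)
          = (∑ j ∈ range (J + 1), (-1 : ℝ) ^ k * ee n k v * (y ^ j * hZ n (m - k - j) v))
            + ∑ j ∈ range (J + 1), (-1 : ℝ) ^ k * (y * (if k = 0 then 0 else ee n (k - 1) v))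
                * (y ^ j * hZ n (m - k - j) v) := by
      intro k _
      rw [← Finset.sum_add_distrib]
      refine Finset.sum_congr rfl fun j _ => ?_
      rw [esplit k]; ring
    rw [Finset.sum_congr rfl split2, Finset.sum_add_distrib]
    have hA : ∑ k ∈ range (n + 2), ∑ j ∈ range (J + 1),
        (-1 : ℝ) ^ k * ee n k v * (y ^ j * hZ n (m - k - j) v)
          = ∑ j ∈ range (J + 1), y ^ j * G (m - j) := by
      rw [Finset.sum_comm]
      refine Finset.sum_congr rfl fun j _ => ?_
      rw [Finset.sum_range_succ, ee_of_lt (by omega), hG]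
      simp only [mul_zero, zero_mul, mul_zero, add_zero]
      rw [Finset.mul_sum]
      refine Finset.sum_congr rfl fun k _ => ?_
      have : m - k - j = m - j - k := by ring
      rw [this]; ring
    have hB : ∑ k ∈ range (n + 2), ∑ j ∈ range (J + 1),
        (-1 : ℝ) ^ k * (y * (if k = 0 then 0 else ee n (k - 1) v))
            * (y ^ j * hZ n (m - k - j) v)
          = -∑ j ∈ range (J + 1), y ^ (j + 1) * G (m - 1 - j) := by
      rw [Finset.sum_range_succ']
      have z0 : (∑ j ∈ range (J + 1), (-1 : ℝ) ^ 0
          * (y * (if (0:ℕ) = 0 then 0 else ee n (0 - 1) v)) * (y ^ j * hZ n (m - (0:ℕ) - j) v)) = 0 := by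
        simp
      rw [z0, add_zero, Finset.sum_comm]
      have inner : ∀ j ∈ range (J + 1),
          (∑ k ∈ range (n + 1), (-1 : ℝ) ^ (k + 1)
              * (y * (if k + 1 = 0 then 0 else ee n (k + 1 - 1) v))
              * (y ^ j * hZ n (m - (k + 1 : ℕ) - j) v))
            = ∑ k ∈ range (n + 1),
                -(y ^ (j + 1) * ((-1 : ℝ) ^ k * ee n k v * hZ n (m - 1 - j - k) v)) := by
        intro j _
        refine Finset.sum_congr rfl fun k _ => ?_
        have h1 : (k + 1 : ℕ) ≠ 0 := by omega
        rw [if_neg h1]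
        have h2 : m - (k + 1 : ℕ) - j = m - 1 - j - k := by push_cast; ring
        rw [h2]
        simp only [Nat.add_sub_cancel]
        rw [pow_succ, pow_succ]
        ring
      rw [Finset.sum_congr rfl fun j hj => (inner j hj).trans
        (by rw [Finset.sum_neg_distrib, ← Finset.mul_sum])]
      rw [Finset.sum_neg_distrib]
    rw [hA, hB]
    have hstep : ∑ j ∈ range (J + 1), y ^ (j + 1) * G (m - 1 - j)
        = ∑ j ∈ range (J + 1), y ^ j * G (m - j) := by
      have e1 : ∑ j ∈ range (J + 2), y ^ j * G (m - j)
          = (∑ j ∈ range (J + 1), y ^ (j + 1) * G (m - (j + 1 : ℕ))) + y ^ 0 * G (m - 0) :=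
        Finset.sum_range_succ' _ _
      have e2 : ∑ j ∈ range (J + 2), y ^ j * G (m - j)
          = (∑ j ∈ range (J + 1), y ^ j * G (m - j)) + y ^ (J + 1) * G (m - (J + 1 : ℕ)) :=
        Finset.sum_range_succ _ _
      have hJm : (J : ℤ) = m := by
        rw [hJ]; exact Int.toNat_of_nonneg (by omega)
      have e3 : G (m - ((J : ℕ) + 1 : ℕ)) = 0 := hGneg _ (by push_cast; omega)
      have e4 : G (m - 0) = 0 := by rw [sub_zero]; exact hG1 m hm
      have e5 : ∑ j ∈ range (J + 1), y ^ (j + 1) * G (m - 1 - j)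
          = ∑ j ∈ range (J + 1), y ^ (j + 1) * G (m - (j + 1 : ℕ)) := by
        refine Finset.sum_congr rfl fun j _ => ?_
        have hcast : m - 1 - (j : ℤ) = m - ((j + 1 : ℕ) : ℤ) := by push_cast; ring
        rw [hcast]
      rw [e3] at e2
      rw [e4] at e1
      rw [e5]
      linarith [e1, e2]
    rw [hstep]; ring

lemma det_eq_zero_of_ge (n : ℕ) (u : Fin n → ℝ) (d : Fin (n + 1) → ℤ)
    (hd : ∀ i, 1 - (n : ℤ) ≤ d i) :
    Matrix.det (Matrix.of fun i j : Fin (n + 1) => hZ n (d i + j) u) = 0 := by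
  rw [← Matrix.exists_mulVec_eq_zero_iff]
  refine ⟨fun j => (-1 : ℝ) ^ (n - (j : ℕ)) * ee n (n - (j : ℕ)) u, ?_, ?_⟩
  · intro h
    have := congrFun h (Fin.last n)
    simp [ee_zero] at this
  · funext i
    simp only [Matrix.mulVec, dotProduct, Matrix.of_apply, Pi.zero_apply]
    rw [Fin.sum_univ_eq_sum_range
      (fun j => hZ n (d i + j) u * ((-1 : ℝ) ^ (n - j) * ee n (n - j) u))]
    rw [← Finset.sum_range_reflect]
    have : ∀ k ∈ range (n + 1),
        hZ n (d i + (n + 1 - 1 - k : ℕ)) u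
            * ((-1 : ℝ) ^ (n - (n + 1 - 1 - k : ℕ)) * ee n (n - (n + 1 - 1 - k : ℕ)) u)
          = (-1 : ℝ) ^ k * ee n k u * hZ n ((d i + n) - k) u := by
      intro k hk
      rw [Finset.mem_range] at hk
      have h1 : n + 1 - 1 - k = n - k := by omega
      have h2 : n - (n - k) = k := by omega
      have h3 : d i + ((n - k : ℕ) : ℤ) = (d i + n) - k := by
        have : ((n - k : ℕ) : ℤ) = (n : ℤ) - k := by omega
        rw [this]; ring
      rw [h1, h2, h3]; ring
    rw [Finset.sum_congr rfl this, eh_rel n u (d i + n) (by have := hd i; omega)]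

lemma step1 (n : ℕ) (lam : Fin (n + 1) → ℕ) (u : Fin n → ℝ) (x : ℝ) :
    schur lam (Fin.snoc u x)
      = ∑ k ∈ Fintype.piFinset (fun i : Fin (n + 1) => range (lam i + (n - (i : ℕ)) + 1)),
          x ^ (∑ i, k i) *
            Matrix.det (Matrix.of fun i j : Fin (n + 1) =>
              hZ n ((lam i : ℤ) - k i - i + j) u) := by
  classical
  rw [schur]
  have hM : (Matrix.of fun i j : Fin (n + 1) => hZ (n + 1) ((lam i : ℤ) - i + j) (Fin.snoc u x))
      = fun i => ∑ k ∈ range (lam i + (n - (i : ℕ)) + 1),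
          x ^ k • (fun j : Fin (n + 1) => hZ n ((lam i : ℤ) - i + j - k) u) := by
    funext i j
    rw [Finset.sum_apply]
    simp only [Pi.smul_apply, smul_eq_mul, Matrix.of_apply]
    exact hZ_snoc n ((lam i : ℤ) - i + j) (lam i + (n - (i : ℕ)))
      (by push_cast; omega) u x
  show (Matrix.detRowAlternating (R := ℝ) (n := Fin (n + 1))).toMultilinearMap _ = _
  rw [hM]
  rw [(Matrix.detRowAlternating (R := ℝ) (n := Fin (n + 1))).toMultilinearMap.map_sum_finset
    (fun i (k : ℕ) => x ^ k • (fun j : Fin (n + 1) => hZ n ((lam i : ℤ) - i + j - (k : ℤ)) u))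
    (fun i => range (lam i + (n - (i : ℕ)) + 1))]
  refine Finset.sum_congr rfl fun k _ => ?_
  rw [MultilinearMap.map_smul_univ]
  rw [Finset.prod_pow_eq_pow_sum]
  rw [smul_eq_mul]
  congr 1
  show Matrix.det _ = Matrix.det _
  congr 1
  funext i j
  show hZ n ((lam i : ℤ) - i + j - k i) u = hZ n ((lam i : ℤ) - k i - i + j) u
  congr 1
  ring

def badSet (n : ℕ) (lam : Fin (n + 1) → ℕ) (k : Fin (n + 1) → ℕ) : Finset (Fin n) :=
  univ.filter fun i => lam i.castSucc - lam i.succ < k i.castSucc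

def swapk (n : ℕ) (lam : Fin (n + 1) → ℕ) (k : Fin (n + 1) → ℕ) (i0 : Fin n) : Fin (n + 1) → ℕ :=
  Function.update
    (Function.update k i0.castSucc (k i0.succ + (lam i0.castSucc - lam i0.succ + 1)))
    i0.succ (k i0.castSucc - (lam i0.castSucc - lam i0.succ + 1))

section SwapLemmas
variable {n : ℕ} {lam : Fin (n + 1) → ℕ} {k : Fin (n + 1) → ℕ} {i0 : Fin n}

lemma castSucc_ne_succ : i0.castSucc ≠ i0.succ := by
  intro h
  have := congrArg Fin.val h
  simp at this

lemma swapk_castSucc (k : Fin (n + 1) → ℕ) (i0 : Fin n) :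
    swapk n lam k i0 i0.castSucc = k i0.succ + (lam i0.castSucc - lam i0.succ + 1) := by
  rw [swapk, Function.update_of_ne castSucc_ne_succ, Function.update_self]

lemma swapk_succ (k : Fin (n + 1) → ℕ) (i0 : Fin n) :
    swapk n lam k i0 i0.succ = k i0.castSucc - (lam i0.castSucc - lam i0.succ + 1) := by
  rw [swapk, Function.update_self]

lemma swapk_other (k : Fin (n + 1) → ℕ) (i0 : Fin n) {i : Fin (n + 1)}
    (h1 : i ≠ i0.castSucc) (h2 : i ≠ i0.succ) :
    swapk n lam k i0 i = k i := by
  rw [swapk, Function.update_of_ne h2, Function.update_of_ne h1]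

lemma swapk_sum (hbad : lam i0.castSucc - lam i0.succ < k i0.castSucc) :
    ∑ i, swapk n lam k i0 i = ∑ i, k i := by
  classical
  have h1 : ∑ i, swapk n lam k i0 i
      = swapk n lam k i0 i0.succ + ∑ i ∈ univ \ {i0.succ}, swapk n lam k i0 i := by
    rw [Finset.sum_eq_sum_sdiff_singleton_add (mem_univ i0.succ)]; ring
  have h2 : ∑ i ∈ univ \ {i0.succ}, swapk n lam k i0 i
      = swapk n lam k i0 i0.castSucc + ∑ i ∈ (univ \ {i0.succ}) \ {i0.castSucc}, k i := by
    rw [Finset.sum_eq_sum_sdiff_singleton_add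
      (by simp [castSucc_ne_succ] : i0.castSucc ∈ univ \ {i0.succ})]
    rw [add_comm]
    congr 1
    refine Finset.sum_congr rfl fun i hi => ?_
    simp only [Finset.mem_sdiff, Finset.mem_singleton] at hi
    exact swapk_other k i0 hi.2 hi.1.2
  have h3 : ∑ i, k i = k i0.succ + (k i0.castSucc + ∑ i ∈ (univ \ {i0.succ}) \ {i0.castSucc}, k i) := by
    rw [Finset.sum_eq_sum_sdiff_singleton_add (mem_univ i0.succ),
      Finset.sum_eq_sum_sdiff_singleton_add
      (by simp [castSucc_ne_succ] : i0.castSucc ∈ univ \ {i0.succ})]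
    ring
  rw [h1, h2, h3, swapk_succ, swapk_castSucc]
  omega

lemma swapk_swapk (hbad : lam i0.castSucc - lam i0.succ < k i0.castSucc) :
    swapk n lam (swapk n lam k i0) i0 = k := by
  funext i
  by_cases h1 : i = i0.castSucc
  · subst h1
    rw [swapk_castSucc, swapk_succ]
    omega
  by_cases h2 : i = i0.succ
  · subst h2
    rw [swapk_succ, swapk_castSucc]
    omega
  · rw [swapk_other _ _ h1 h2, swapk_other _ _ h1 h2]

lemma swapk_det (hlam : Antitone lam) (u : Fin n → ℝ)
    (hbad : lam i0.castSucc - lam i0.succ < k i0.castSucc) :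
    (Matrix.of fun i j : Fin (n + 1) =>
        hZ n ((lam i : ℤ) - swapk n lam k i0 i - i + j) u).det
      = -(Matrix.of fun i j : Fin (n + 1) => hZ n ((lam i : ℤ) - k i - i + j) u).det := by
  have hls : lam i0.succ ≤ lam i0.castSucc := hlam (Fin.castSucc_le_succ i0)
  have hrow : (Matrix.of fun i j : Fin (n + 1) =>
      hZ n ((lam i : ℤ) - swapk n lam k i0 i - i + j) u)
        = fun r => (Matrix.of fun i j : Fin (n + 1) =>
            hZ n ((lam i : ℤ) - k i - i + j) u) (Equiv.swap i0.castSucc i0.succ r) := by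
    funext r j
    by_cases h1 : r = i0.castSucc
    · subst h1
      rw [Equiv.swap_apply_left]
      show hZ n _ u = hZ n _ u
      rw [swapk_castSucc]
      congr 1
      simp only [Fin.coe_castSucc, Fin.val_succ]
      omega
    by_cases h2 : r = i0.succ
    · subst h2
      rw [Equiv.swap_apply_right]
      show hZ n _ u = hZ n _ u
      rw [swapk_succ]
      congr 1
      simp only [Fin.coe_castSucc, Fin.val_succ]
      omega
    · rw [Equiv.swap_apply_of_ne_of_ne h1 h2]
      show hZ n _ u = hZ n _ u
      rw [swapk_other _ _ h1 h2]
  have : (fun r => (Matrix.of fun i j : Fin (n + 1) =>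
      hZ n ((lam i : ℤ) - k i - i + j) u) (Equiv.swap i0.castSucc i0.succ r))
      = (Matrix.of fun i j : Fin (n + 1) =>
          hZ n ((lam i : ℤ) - k i - i + j) u).submatrix (Equiv.swap i0.castSucc i0.succ) id := by
    rfl
  rw [hrow, this, Matrix.det_permute, Equiv.Perm.sign_swap castSucc_ne_succ]
  simp

lemma mem_badSet {i : Fin n} :
    i ∈ badSet n lam k ↔ lam i.castSucc - lam i.succ < k i.castSucc := by
  simp [badSet]

lemma badSet_nonempty (h : ∃ i : Fin n, lam i.castSucc - lam i.succ < k i.castSucc) :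
    (badSet n lam k).Nonempty :=
  ⟨h.choose, mem_badSet.2 h.choose_spec⟩

lemma swapk_mem (hlam : Antitone lam)
    (hk : k ∈ Fintype.piFinset (fun i : Fin (n + 1) => range (lam i + (n - (i : ℕ)) + 1)))
    (hbad : lam i0.castSucc - lam i0.succ < k i0.castSucc) :
    swapk n lam k i0 ∈
      Fintype.piFinset (fun i : Fin (n + 1) => range (lam i + (n - (i : ℕ)) + 1)) := by
  rw [Fintype.mem_piFinset] at hk ⊢
  have hls : lam i0.succ ≤ lam i0.castSucc := hlam (Fin.castSucc_le_succ i0)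
  have hc := hk i0.castSucc
  have hs := hk i0.succ
  rw [Finset.mem_range] at hc hs
  simp only [Fin.coe_castSucc, Fin.val_succ] at hc hs
  have hi0 : (i0 : ℕ) < n := i0.isLt
  intro i
  rw [Finset.mem_range]
  by_cases h1 : i = i0.castSucc
  · subst h1
    rw [swapk_castSucc]
    simp only [Fin.coe_castSucc]
    omega
  by_cases h2 : i = i0.succ
  · subst h2
    rw [swapk_succ]
    simp only [Fin.val_succ]
    omega
  · rw [swapk_other _ _ h1 h2]
    have := hk i
    rw [Finset.mem_range] at this
    exact this

lemma min'_swapk_bad (h : (badSet n lam k).Nonempty) :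
    lam ((badSet n lam k).min' h).castSucc - lam ((badSet n lam k).min' h).succ
      < swapk n lam k ((badSet n lam k).min' h) ((badSet n lam k).min' h).castSucc := by
  rw [swapk_castSucc]
  omega

lemma min'_swapk (h : (badSet n lam k).Nonempty)
    (h' : (badSet n lam (swapk n lam k ((badSet n lam k).min' h))).Nonempty) :
    (badSet n lam (swapk n lam k ((badSet n lam k).min' h))).min' h'
      = (badSet n lam k).min' h := by
  set i0 := (badSet n lam k).min' h with hi0
  refine le_antisymm (Finset.min'_le _ _ (mem_badSet.2 (min'_swapk_bad h))) ?_
  refine Finset.le_min' _ _ _ fun j hj => ?_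
  by_contra hlt
  push_neg at hlt
  -- j < i0, and j is bad for swapk k i0; but swapk agrees with k below i0
  have hji : j ≠ i0 := Fin.ne_of_lt hlt
  have hne1 : j.castSucc ≠ i0.castSucc := fun hcon =>
    hji (Fin.castSucc_injective _ hcon)
  have hne2 : j.castSucc ≠ i0.succ := by
    intro hcon
    have := congrArg Fin.val hcon
    simp only [Fin.coe_castSucc, Fin.val_succ] at this
    have : (j : ℕ) < (i0 : ℕ) := hlt
    omega
  rw [mem_badSet, swapk_other _ _ hne1 hne2] at hj
  have : i0 ≤ j := hi0 ▸ Finset.min'_le _ _ (mem_badSet.2 hj)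
  exact absurd hlt (not_lt.2 this)

end SwapLemmas

lemma bad_sum (n : ℕ) (lam : Fin (n + 1) → ℕ) (hlam : Antitone lam) (u : Fin n → ℝ) (x : ℝ) :
    ∑ k ∈ (Fintype.piFinset fun i : Fin (n + 1) => range (lam i + (n - (i : ℕ)) + 1)).filter
        (fun k => ∃ i : Fin n, lam i.castSucc - lam i.succ < k i.castSucc),
      x ^ (∑ i, k i) *
        (Matrix.of fun i j : Fin (n + 1) => hZ n ((lam i : ℤ) - k i - i + j) u).det = 0 := by
  classical
  have hb : ∀ k (hk : k ∈ (Fintype.piFinset fun i : Fin (n + 1) =>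
      range (lam i + (n - (i : ℕ)) + 1)).filter
        (fun k => ∃ i : Fin n, lam i.castSucc - lam i.succ < k i.castSucc)),
      (badSet n lam k).Nonempty := fun k hk => badSet_nonempty (Finset.mem_filter.1 hk).2
  refine Finset.sum_involution
    (fun k hk => swapk n lam k ((badSet n lam k).min' (hb k hk))) ?_ ?_ ?_ ?_
  · -- f a + f (g a) = 0
    intro k hk
    have hbad : lam ((badSet n lam k).min' (hb k hk)).castSucc
        - lam ((badSet n lam k).min' (hb k hk)).succ
        < k ((badSet n lam k).min' (hb k hk)).castSucc :=
      mem_badSet.1 (Finset.min'_mem _ _)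
    rw [swapk_sum hbad, swapk_det hlam u hbad]
    ring
  · -- f a ≠ 0 → g a ≠ a
    intro k hk hf heq
    apply hf
    set i0 := (badSet n lam k).min' (hb k hk) with hi0
    have hbad : lam i0.castSucc - lam i0.succ < k i0.castSucc :=
      mem_badSet.1 (Finset.min'_mem _ _)
    have hval : k i0.succ + (lam i0.castSucc - lam i0.succ + 1) = k i0.castSucc := by
      have h2 := congrFun heq i0.castSucc
      rwa [swapk_castSucc] at h2
    have hrow : (Matrix.of fun i j : Fin (n + 1) =>
        hZ n ((lam i : ℤ) - k i - i + j) u) i0.castSucc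
        = (Matrix.of fun i j : Fin (n + 1) => hZ n ((lam i : ℤ) - k i - i + j) u) i0.succ := by
      funext j
      show hZ n _ u = hZ n _ u
      congr 1
      have hls : lam i0.succ ≤ lam i0.castSucc := hlam (Fin.castSucc_le_succ i0)
      simp only [Fin.coe_castSucc, Fin.val_succ]
      omega
    rw [Matrix.det_zero_of_row_eq castSucc_ne_succ hrow, mul_zero]
  · -- g a ∈ s
    intro k hk
    have hbad : lam ((badSet n lam k).min' (hb k hk)).castSucc
        - lam ((badSet n lam k).min' (hb k hk)).succ
        < k ((badSet n lam k).min' (hb k hk)).castSucc :=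
      mem_badSet.1 (Finset.min'_mem _ _)
    rw [Finset.mem_filter]
    refine ⟨swapk_mem hlam (Finset.mem_filter.1 hk).1 hbad, ?_⟩
    exact ⟨(badSet n lam k).min' (hb k hk), by rw [swapk_castSucc]; omega⟩
  · -- involution
    intro k hk
    have hbad : lam ((badSet n lam k).min' (hb k hk)).castSucc
        - lam ((badSet n lam k).min' (hb k hk)).succ
        < k ((badSet n lam k).min' (hb k hk)).castSucc :=
      mem_badSet.1 (Finset.min'_mem _ _)
    rw [min'_swapk (hb k hk)]
    exact swapk_swapk hbad

lemma good_vanish (n : ℕ) (lam : Fin (n + 1) → ℕ) (hlam : Antitone lam) (u : Fin n → ℝ)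
    (k : Fin (n + 1) → ℕ)
    (hgood : ∀ i : Fin n, k i.castSucc ≤ lam i.castSucc - lam i.succ)
    (hlast : k (Fin.last n) < lam (Fin.last n)) :
    (Matrix.of fun i j : Fin (n + 1) => hZ n ((lam i : ℤ) - k i - i + j) u).det = 0 := by
  have := det_eq_zero_of_ge n u (fun i => (lam i : ℤ) - k i - i) ?_
  · convert this using 3
  · intro i
    induction i using Fin.lastCases with
    | last =>
      simp only [Fin.val_last]
      omega
    | cast i' =>
      have h1 := hgood i'
      have h2 : lam i'.succ ≤ lam i'.castSucc := hlam (Fin.castSucc_le_succ i')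
      have h3 : lam (Fin.last n) ≤ lam i'.succ := hlam (Fin.le_last i'.succ)
      have h4 : (i' : ℕ) < n := i'.isLt
      simp only [Fin.coe_castSucc]
      omega

lemma good_schur (n : ℕ) (lam : Fin (n + 1) → ℕ) (u : Fin n → ℝ)
    (k : Fin (n + 1) → ℕ)
    (hle : ∀ i : Fin n, k i.castSucc ≤ lam i.castSucc)
    (hlast : k (Fin.last n) = lam (Fin.last n)) :
    (Matrix.of fun i j : Fin (n + 1) => hZ n ((lam i : ℤ) - k i - i + j) u).det
      = schur (fun i : Fin n => lam i.castSucc - k i.castSucc) u := by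
  rw [Matrix.det_succ_row _ (Fin.last n)]
  rw [Finset.sum_eq_single (Fin.last n)]
  · have e1 : (Matrix.of fun i j : Fin (n + 1) => hZ n ((lam i : ℤ) - k i - i + j) u)
        (Fin.last n) (Fin.last n) = 1 := by
      show hZ n _ u = 1
      have : (lam (Fin.last n) : ℤ) - k (Fin.last n) - (Fin.last n : ℕ) + (Fin.last n : ℕ)
          = 0 := by
        simp only [Fin.val_last]
        omega
      rw [this, hZ_zero]
    rw [e1, mul_one]
    have e2 : (-1 : ℝ) ^ ((Fin.last n : ℕ) + (Fin.last n : ℕ)) = 1 := by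
      simp only [Fin.val_last]
      rw [show n + n = 2 * n by ring, pow_mul]
      norm_num
    rw [e2, one_mul]
    rw [schur]
    congr 1
    funext i j
    show hZ n _ u = hZ n _ u
    rw [Fin.succAbove_last]
    show hZ n ((lam i.castSucc : ℤ) - k i.castSucc - (i.castSucc : ℕ) + (j.castSucc : ℕ)) u
      = hZ n _ u
    congr 1
    have := hle i
    simp only [Fin.coe_castSucc]
    omega
  · intro j _ hj
    have hjn : (j : ℕ) < n := by
      rcases Fin.lt_or_eq_of_le (Fin.le_last j) with h | h
      · exact h
      · exact absurd h hj
    have : (Matrix.of fun i j : Fin (n + 1) => hZ n ((lam i : ℤ) - k i - i + j) u)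
        (Fin.last n) j = 0 := by
      show hZ n _ u = 0
      apply hZ_neg
      simp only [Fin.val_last]
      omega
    rw [this, mul_zero, zero_mul]
  · intro h
    exact absurd (mem_univ _) h


/-- Branching rule for Schur polynomials:
`S_λ(u₁,…,uₙ,x) = Σ_{μ ≺ λ} S_μ(u₁,…,uₙ) · x^{|λ|−|μ|}`, the sum running over all
partitions `μ` interlacing `λ`, i.e. `λ_i ≥ μ_i ≥ λ_{i+1}` for all `i`. -/
theorem schur_branching (n : ℕ) (lam : Fin (n + 1) → ℕ) (hlam : Antitone lam)
    (u : Fin n → ℝ) (x : ℝ) :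
    schur lam (Fin.snoc u x : Fin (n + 1) → ℝ)
      = ∑ μ ∈ (Fintype.piFinset fun i : Fin n => Finset.range (lam i.castSucc + 1)).filter
            (fun μ => ∀ i : Fin n, lam i.succ ≤ μ i ∧ μ i ≤ lam i.castSucc),
          schur μ u * x ^ ((∑ i, lam i) - ∑ i, μ i) := by
  classical
  rw [step1 n lam u x]
  rw [← Finset.sum_filter_add_sum_filter_not
    (Fintype.piFinset fun i : Fin (n + 1) => range (lam i + (n - (i : ℕ)) + 1))
    (fun k => ∃ i : Fin n, lam i.castSucc - lam i.succ < k i.castSucc)]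
  rw [bad_sum n lam hlam u x, zero_add]
  rw [← Finset.sum_filter_add_sum_filter_not _ (fun k => k (Fin.last n) = lam (Fin.last n))]
  have hvanish : ∑ k ∈ (((Fintype.piFinset fun i : Fin (n + 1) =>
        range (lam i + (n - (i : ℕ)) + 1)).filter
        (fun k => ¬∃ i : Fin n, lam i.castSucc - lam i.succ < k i.castSucc)).filter
        (fun k => ¬k (Fin.last n) = lam (Fin.last n))),
      x ^ (∑ i, k i) *
        (Matrix.of fun i j : Fin (n + 1) => hZ n ((lam i : ℤ) - k i - i + j) u).det = 0 := by
    refine Finset.sum_eq_zero fun k hk => ?_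
    rw [Finset.mem_filter, Finset.mem_filter] at hk
    obtain ⟨⟨hS, hgood⟩, hne⟩ := hk
    push_neg at hgood
    have hlast : k (Fin.last n) < lam (Fin.last n) := by
      have := (Fintype.mem_piFinset.1 hS) (Fin.last n)
      rw [Finset.mem_range] at this
      simp only [Fin.val_last] at this
      omega
    rw [good_vanish n lam hlam u k (fun i => hgood i) hlast, mul_zero]
  rw [hvanish, add_zero]
  -- final reindexing
  refine Finset.sum_nbij' (fun k => fun i : Fin n => lam i.castSucc - k i.castSucc)
    (fun μ => Fin.snoc (fun i : Fin n => lam i.castSucc - μ i) (lam (Fin.last n)))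
    ?_ ?_ ?_ ?_ ?_
  · -- maps into target
    intro k hk
    rw [Finset.mem_filter, Finset.mem_filter] at hk
    obtain ⟨⟨hS, hgood⟩, hlast⟩ := hk
    push_neg at hgood
    rw [Finset.mem_filter]
    constructor
    · rw [Fintype.mem_piFinset]
      intro i
      rw [Finset.mem_range]
      omega
    · intro i
      dsimp only
      have h1 := hgood i
      have h2 : lam i.succ ≤ lam i.castSucc := hlam (Fin.castSucc_le_succ i)
      omega
  · -- maps back
    intro μ hμ
    rw [Finset.mem_filter] at hμ
    obtain ⟨hμS, hμint⟩ := hμ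
    rw [Finset.mem_filter, Finset.mem_filter]
    refine ⟨⟨?_, ?_⟩, ?_⟩
    · rw [Fintype.mem_piFinset]
      intro i
      rw [Finset.mem_range]
      induction i using Fin.lastCases with
      | last => simp
      | cast i' =>
        rw [Fin.snoc_castSucc]
        simp only [Fin.coe_castSucc]
        omega
    · rintro ⟨i, hi⟩
      rw [Fin.snoc_castSucc] at hi
      have h1 := (hμint i).1
      have h2 := (hμint i).2
      omega
    · rw [Fin.snoc_last]
  · -- left inverse
    intro k hk
    rw [Finset.mem_filter, Finset.mem_filter] at hk
    obtain ⟨⟨hS, hgood⟩, hlast⟩ := hk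
    push_neg at hgood
    funext i
    induction i using Fin.lastCases with
    | last =>
      dsimp only
      rw [Fin.snoc_last]
      exact hlast.symm
    | cast i' =>
      dsimp only
      rw [Fin.snoc_castSucc]
      have h1 := hgood i'
      omega
  · -- right inverse
    intro μ hμ
    rw [Finset.mem_filter] at hμ
    obtain ⟨hμS, hμint⟩ := hμ
    funext i
    rw [Fin.snoc_castSucc]
    have h2 := (hμint i).2
    omega
  · -- values agree
    intro k hk
    rw [Finset.mem_filter, Finset.mem_filter] at hk
    obtain ⟨⟨hS, hgood⟩, hlast⟩ := hk
    push_neg at hgood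
    have hle : ∀ i : Fin n, k i.castSucc ≤ lam i.castSucc := by
      intro i
      have h1 := hgood i
      omega
    rw [good_schur n lam u k hle hlast]
    rw [mul_comm]
    congr 1
    -- exponents agree
    have hsum1 : ∑ i, k i = ∑ i : Fin n, k i.castSucc + k (Fin.last n) :=
      Fin.sum_univ_castSucc k
    have hsum2 : ∑ i, lam i = ∑ i : Fin n, lam i.castSucc + lam (Fin.last n) :=
      Fin.sum_univ_castSucc lam
    have hsum3 : ∑ i : Fin n, (lam i.castSucc - k i.castSucc) + ∑ i : Fin n, k i.castSucc
        = ∑ i : Fin n, lam i.castSucc := by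
      rw [← Finset.sum_add_distrib]
      refine Finset.sum_congr rfl fun i _ => ?_
      have := hle i
      omega
    congr 1
    dsimp only
    omega
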